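/- Let R be a commutative ring and F ∈ R. Let W⁰, W¹, V⁰, V¹ be R-modules, set M⁰ = W⁰ ⊕ V⁰ and M¹ = W¹ ⊕ V¹, and let D¹⁰ : M⁰ → M¹ and D⁰¹ : M¹ → M⁰ be R-linear maps with D⁰¹ ∘ D¹⁰ = F·id_{M⁰} and D¹⁰ ∘ D⁰¹ = F·id_{M¹}. Write the block components of D¹⁰ as d_{WW}¹⁰ : W⁰ → W¹, d_{WV}¹⁰ : V⁰ → W¹, d_{VW}¹⁰ : W⁰ → V¹, φ := d_{VV}¹⁰ : V⁰ → V¹, and similarly for D⁰¹, and assume φ is an isomorphism. Define D_W¹⁰ = d_{WW}¹⁰ − d_{WV}¹⁰ ∘ φ⁻¹ ∘ d_{VW}¹⁰ and D_W⁰¹ = d_{WW}⁰¹. Then: (1) D_W⁰¹ ∘ D_W¹⁰ = F·id_{W⁰} and D_W¹⁰ ∘ D_W⁰¹ = F·id_{W¹}; (2) there exist grading-preserving R-linear maps ι : W⁰ ⊕ W¹ → M⁰ ⊕ M¹ and π : M⁰ ⊕ M¹ → W⁰ ⊕ W¹ intertwining the differentials (D ∘ ι = ι ∘ D_W and D_W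 ∘ π = π ∘ D) such that π ∘ ι = id, together with an odd R-linear map χ : M⁰ ⊕ M¹ → M⁰ ⊕ M¹ with id − ι ∘ π = D ∘ χ + χ ∘ D. In particular (M, D) and (W, D_W) are homotopy equivalent matrix factorizations of F. -/

import Mathlib

section GaussElimination

variable {R : Type*} [CommRing R]
variable {W0 W1 V0 V1 : Type*}
variable [AddCommGroup W0] [AddCommGroup W1] [AddCommGroup V0] [AddCommGroup V1]
variable [Module R W0] [Module R W1] [Module R V0] [Module R V1]

/-- The block component `d_{WW}¹⁰ : W⁰ → W¹` of `D¹⁰ : W⁰ ⊕ V⁰ → W¹ ⊕ V¹`. -/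
def dWW10 (D10 : W0 × V0 →ₗ[R] W1 × V1) : W0 →ₗ[R] W1 :=
  (LinearMap.fst R W1 V1).comp (D10.comp (LinearMap.inl R W0 V0))

/-- The block component `d_{WV}¹⁰ : V⁰ → W¹`. -/
def dWV10 (D10 : W0 × V0 →ₗ[R] W1 × V1) : V0 →ₗ[R] W1 :=
  (LinearMap.fst R W1 V1).comp (D10.comp (LinearMap.inr R W0 V0))

/-- The block component `d_{VW}¹⁰ : W⁰ → V¹`. -/
def dVW10 (D10 : W0 × V0 →ₗ[R] W1 × V1) : W0 →ₗ[R] V1 :=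
  (LinearMap.snd R W1 V1).comp (D10.comp (LinearMap.inl R W0 V0))

/-- The block component `φ = d_{VV}¹⁰ : V⁰ → V¹`. -/
def phiVV (D10 : W0 × V0 →ₗ[R] W1 × V1) : V0 →ₗ[R] V1 :=
  (LinearMap.snd R W1 V1).comp (D10.comp (LinearMap.inr R W0 V0))

/-- The block component `d_{WW}⁰¹ : W¹ → W⁰` of `D⁰¹`. -/
def dWW01 (D01 : W1 × V1 →ₗ[R] W0 × V0) : W1 →ₗ[R] W0 :=
  (LinearMap.fst R W0 V0).comp (D01.comp (LinearMap.inl R W1 V1))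

/-- The reduced differential `D_W¹⁰ = d_{WW}¹⁰ − d_{WV}¹⁰ ∘ φ⁻¹ ∘ d_{VW}¹⁰`. -/
def DW10 (D10 : W0 × V0 →ₗ[R] W1 × V1) (φinv : V1 →ₗ[R] V0) : W0 →ₗ[R] W1 :=
  dWW10 D10 - (dWV10 D10).comp (φinv.comp (dVW10 D10))

/-- **Gauss elimination for matrix factorizations.**  If `(M⁰ = W⁰ ⊕ V⁰, M¹ = W¹ ⊕ V¹, D)`
is a matrix factorization of `F` whose component `φ = d_{VV}¹⁰ : V⁰ → V¹` is an isomorphism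
(with inverse `φinv`), then the reduced differentials `D_W¹⁰, D_W⁰¹` form a matrix
factorization of `F` on `W⁰ ⊕ W¹`, and `(M, D)` and `(W, D_W)` are homotopy equivalent:
there are grading-preserving maps `ι`, `π` intertwining the differentials with `π ∘ ι = id`
and an odd homotopy `χ` with `id − ι ∘ π = D ∘ χ + χ ∘ D`. -/
theorem gauss_elimination_matrix_factorization (F : R)
    (D10 : W0 × V0 →ₗ[R] W1 × V1) (D01 : W1 × V1 →ₗ[R] W0 × V0)
    (hD0 : D01.comp D10 = F • (LinearMap.id : W0 × V0 →ₗ[R] W0 × V0))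
    (hD1 : D10.comp D01 = F • (LinearMap.id : W1 × V1 →ₗ[R] W1 × V1))
    (φinv : V1 →ₗ[R] V0)
    (hφ1 : (phiVV D10).comp φinv = LinearMap.id)
    (hφ2 : φinv.comp (phiVV D10) = LinearMap.id) :
    ((dWW01 D01).comp (DW10 D10 φinv) = F • (LinearMap.id : W0 →ₗ[R] W0)) ∧
    ((DW10 D10 φinv).comp (dWW01 D01) = F • (LinearMap.id : W1 →ₗ[R] W1)) ∧
    ∃ (ι0 : W0 →ₗ[R] W0 × V0) (ι1 : W1 →ₗ[R] W1 × V1)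
      (π0 : W0 × V0 →ₗ[R] W0) (π1 : W1 × V1 →ₗ[R] W1)
      (χ0 : W0 × V0 →ₗ[R] W1 × V1) (χ1 : W1 × V1 →ₗ[R] W0 × V0),
      D10.comp ι0 = ι1.comp (DW10 D10 φinv) ∧
      D01.comp ι1 = ι0.comp (dWW01 D01) ∧
      (DW10 D10 φinv).comp π0 = π1.comp D10 ∧
      (dWW01 D01).comp π1 = π0.comp D01 ∧
      π0.comp ι0 = LinearMap.id ∧
      π1.comp ι1 = LinearMap.id ∧
      (LinearMap.id : W0 × V0 →ₗ[R] W0 × V0) - ι0.comp π0 = D01.comp χ0 + χ1.comp D10 ∧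
      (LinearMap.id : W1 × V1 →ₗ[R] W1 × V1) - ι1.comp π1 = D10.comp χ1 + χ0.comp D01 := by
  -- element-level hypotheses
  have hD0e : ∀ p : W0 × V0, D01 (D10 p) = F • p := fun p => by
    simpa using LinearMap.congr_fun hD0 p
  have hD1e : ∀ p : W1 × V1, D10 (D01 p) = F • p := fun p => by
    simpa using LinearMap.congr_fun hD1 p
  have hφ1e : ∀ x : V1, (D10 (0, φinv x)).2 = x := fun x => by
    simpa [phiVV] using LinearMap.congr_fun hφ1 x
  have hφ2e : ∀ x : V0, φinv (D10 (0, x)).2 = x := fun x => by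
    simpa [phiVV] using LinearMap.congr_fun hφ2 x
  have split10 : ∀ (w : W0) (v : V0), D10 (w, v) = D10 (w, 0) + D10 (0, v) := by
    intro w v
    rw [← map_add]
    congr 1
    simp
  have split01 : ∀ (w : W1) (v : V1), D01 (w, v) = D01 (w, 0) + D01 (0, v) := by
    intro w v
    rw [← map_add]
    congr 1
    simp
  have neg10 : ∀ v : V0, D10 (0, -v) = -D10 (0, v) := by
    intro v
    rw [← map_neg]
    congr 1
    simp
  have add10 : ∀ a b : V0, D10 (0, a + b) = D10 (0, a) + D10 (0, b) := by
    intro a b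
    rw [← map_add]
    congr 1
    simp
  have sub01W : ∀ a b : W1, D01 (a - b, 0) = D01 (a, 0) - D01 (b, 0) := by
    intro a b
    rw [← map_sub]
    congr 1
    simp
  -- applications of DW10
  have dwEq : ∀ w : W0, DW10 D10 φinv w
      = (D10 (w, 0)).1 - (D10 (0, φinv (D10 (w, 0)).2)).1 := by
    intro w
    simp [DW10, dWW10, dWV10, dVW10]
  -- Part 1
  have goal1 : (dWW01 D01).comp (DW10 D10 φinv) = F • (LinearMap.id : W0 →ₗ[R] W0) := by
    ext w
    set u := D10 (w, 0) with hu
    set t := D10 (0, φinv u.2) with ht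
    have hts : t.2 = u.2 := hφ1e u.2
    have hA : D01 (u.1, 0) + D01 (0, u.2) = F • ((w, 0) : W0 × V0) := by
      rw [← split01]; exact hD0e (w, 0)
    have hB : D01 (t.1, 0) + D01 (0, u.2) = F • ((0, φinv u.2) : W0 × V0) := by
      have h : D01 (t.1, t.2) = F • ((0, φinv u.2) : W0 × V0) := hD0e (0, φinv u.2)
      rw [split01, hts] at h
      exact h
    have key : D01 (u.1 - t.1, 0)
        = F • ((w, 0) : W0 × V0) - F • ((0, φinv u.2) : W0 × V0) := by
      rw [← hA, ← hB, add_sub_add_right_eq_sub, ← map_sub]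
      congr 1
      simp
    have hk := congrArg Prod.fst key
    simp only [LinearMap.comp_apply, LinearMap.smul_apply, LinearMap.id_apply]
    rw [dwEq w]
    simpa [dWW01] using hk
  -- key computation for Part 2 and the second intertwining
  have snd_s : ∀ w : W1, φinv (D10 ((D01 (w, 0)).1, 0)).2 = -(D01 (w, 0)).2 := by
    intro w
    have hC : D10 ((D01 (w,0)).1, 0) + D10 (0, (D01 (w,0)).2) = F • ((w, 0) : W1 × V1) := by
      rw [← split10]; exact hD1e (w, 0)
    have h2 := congrArg Prod.snd hC
    simp only [Prod.snd_add, Prod.smul_snd, smul_zero] at h2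
    rw [eq_neg_of_add_eq_zero_left h2, map_neg, hφ2e]
  have goal2 : (DW10 D10 φinv).comp (dWW01 D01) = F • (LinearMap.id : W1 →ₗ[R] W1) := by
    ext w
    have hC : D10 ((D01 (w,0)).1, 0) + D10 (0, (D01 (w,0)).2) = F • ((w, 0) : W1 × V1) := by
      rw [← split10]; exact hD1e (w, 0)
    have h1 := congrArg Prod.fst hC
    simp only [Prod.fst_add, Prod.smul_fst] at h1
    simp only [LinearMap.comp_apply, LinearMap.smul_apply, LinearMap.id_apply, dWW01,
      LinearMap.fst_apply, LinearMap.inl_apply]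
    rw [dwEq, snd_s w, neg10]
    simp only [Prod.fst_neg, sub_neg_eq_add]
    exact h1
  refine ⟨goal1, goal2, LinearMap.prod LinearMap.id (-(φinv ∘ₗ dVW10 D10)),
    LinearMap.inl R W1 V1, LinearMap.fst R W0 V0,
    LinearMap.fst R W1 V1 - (dWV10 D10) ∘ₗ φinv ∘ₗ LinearMap.snd R W1 V1,
    0, (LinearMap.inr R W0 V0) ∘ₗ φinv ∘ₗ LinearMap.snd R W1 V1,
    ?_, ?_, ?_, ?_, ?_, ?_, ?_, ?_⟩
  · -- D10 ∘ ι0 = ι1 ∘ DW10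
    apply LinearMap.ext; intro w
    have hts := hφ1e (D10 (w, 0)).2
    simp only [LinearMap.comp_apply, LinearMap.prod_apply, Pi.prod, LinearMap.id_apply,
      LinearMap.neg_apply, LinearMap.inl_apply, dVW10, LinearMap.fst_apply,
      LinearMap.snd_apply, Function.prod]
    rw [split10, neg10, dwEq]
    refine Prod.ext ?_ ?_ <;> simp [hts, sub_eq_add_neg]
  · -- D01 ∘ ι1 = ι0 ∘ dWW01
    apply LinearMap.ext; intro w
    simp only [LinearMap.comp_apply, LinearMap.inl_apply, LinearMap.prod_apply, Pi.prod,
      LinearMap.id_apply, LinearMap.neg_apply, dWW01, dVW10, LinearMap.fst_apply,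
      LinearMap.snd_apply]
    refine Prod.ext ?_ ?_
    · simp
    · simp [snd_s w]
  · -- DW10 ∘ π0 = π1 ∘ D10
    apply LinearMap.ext; rintro ⟨w, v⟩
    simp only [LinearMap.comp_apply, LinearMap.fst_apply, LinearMap.sub_apply,
      LinearMap.snd_apply, dWV10]
    rw [dwEq, split10 w v]
    have h2v := hφ2e v
    simp [map_add, h2v, add10, sub_eq_add_neg]
  · -- dWW01 ∘ π1 = π0 ∘ D01
    apply LinearMap.ext; rintro ⟨w, v⟩
    simp only [LinearMap.comp_apply, LinearMap.sub_apply, LinearMap.fst_apply,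
      LinearMap.snd_apply, dWV10, dWW01, LinearMap.inl_apply]
    rw [split01 w v, sub01W]
    have hv : (D10 (0, φinv v)).2 = v := hφ1e v
    have hE : D01 ((D10 (0, φinv v)).1, 0) + D01 (0, v) = F • ((0, φinv v) : W0 × V0) := by
      have h : D01 ((D10 (0, φinv v)).1, (D10 (0, φinv v)).2)
          = F • ((0, φinv v) : W0 × V0) := hD0e (0, φinv v)
      rw [split01, hv] at h
      exact h
    have hE1 := congrArg Prod.fst hE
    simp only [Prod.fst_add, Prod.smul_fst, smul_zero] at hE1
    have : (D01 ((D10 (0, φinv v)).1, 0)).1 = -(D01 (0, v)).1 :=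
      eq_neg_of_add_eq_zero_left hE1
    simp [this]
  · -- π0 ∘ ι0 = id
    apply LinearMap.ext; intro w
    simp
  · -- π1 ∘ ι1 = id
    apply LinearMap.ext; intro w
    simp [dWV10, Prod.mk_zero_zero]
  · -- homotopy on M0
    apply LinearMap.ext; rintro ⟨w, v⟩
    simp only [LinearMap.sub_apply, LinearMap.id_apply, LinearMap.comp_apply,
      LinearMap.add_apply, LinearMap.zero_comp, LinearMap.zero_apply, map_zero,
      LinearMap.fst_apply, LinearMap.prod_apply, Pi.prod, LinearMap.neg_apply,
      LinearMap.snd_apply, LinearMap.inr_apply, dVW10, zero_add]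
    rw [split10 w v]
    have h2v := hφ2e v
    refine Prod.ext ?_ ?_ <;> simp [h2v, add_comm]
  · -- homotopy on M1
    apply LinearMap.ext; rintro ⟨w, v⟩
    have hv : (D10 (0, φinv v)).2 = v := hφ1e v
    simp only [LinearMap.sub_apply, LinearMap.id_apply, LinearMap.comp_apply,
      LinearMap.add_apply, LinearMap.zero_comp, LinearMap.zero_apply,
      LinearMap.fst_apply, LinearMap.snd_apply, LinearMap.inr_apply,
      LinearMap.inl_apply, dWV10, add_zero]
    refine Prod.ext ?_ ?_ <;> simp [hv, Prod.mk_zero_zero]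

end GaussElimination
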